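/- Assume the sign-coherence property holds for the pattern, and let D be a skew-symmetrizer of B⁰. Then for every vertex t, C_tᵀ (D B⁰) C_ت = D B_t; that is, the C-matrix transforms the skew-symmetric form D B⁰ into D B_t. -/

import Mathlib

open Matrix

namespace ClusterPattern

variable {ι : Type*} [Fintype ι] [DecidableEq ι]

/-- Entrywise positive part `[A]₊`. -/
def posPart (A : Matrix ι ι ℤ) : Matrix ι ι ℤ := Matrix.of fun i j => max (A i j) 0

/-- `A^{•k}`: all columns other than the `k`-th set to `0`. -/
def colSel (k : ι) (A : Matrix ι ι ℤ) : Matrix ι ι ℤ :=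
  Matrix.of fun i j => if j = k then A i j else 0

/-- `A^{k•}`: all rows other than the `k`-th set to `0`. -/
def rowSel (k : ι) (A : Matrix ι ι ℤ) : Matrix ι ι ℤ :=
  Matrix.of fun i j => if i = k then A i j else 0

/-- `J_k`: identity with `k`-th diagonal entry replaced by `-1`. -/
def Jmat (k : ι) : Matrix ι ι ℤ := Matrix.diagonal fun i => if i = k then -1 else 1

/-- A skew-symmetrizable integer matrix. -/
def IsSkewSymmetrizable (B : Matrix ι ι ℤ) : Prop :=
  ∃ D : ι → ℚ, (∀ i, 0 < D i) ∧ ∀ i j, D i * (B i j : ℚ) = -(D j * (B j i : ℚ))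

/-- Matrix mutation `μ_k`. -/
def mutate (k : ι) (B : Matrix ι ι ℤ) : Matrix ι ι ℤ :=
  Matrix.of fun i j => if i = k ∨ j = k then -B i j
    else B i j + B i k * max (B k j) 0 + max (-B i k) 0 * B k j

/-- The exchange matrix `B_t` at the vertex reached from `B0` along the path `w`. -/
def Bmat (B0 : Matrix ι ι ℤ) (w : List ι) : Matrix ι ι ℤ :=
  w.foldl (fun B k => mutate k B) B0

/-- One mutation step of a `C`-matrix. -/
def Cstep (B C : Matrix ι ι ℤ) (k : ι) : Matrix ι ι ℤ :=
  C * Jmat k + C * rowSel k (posPart B) + colSel k (posPart (-C)) * B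

/-- One mutation step of a `G`-matrix. -/
def Gstep (B0 B C G : Matrix ι ι ℤ) (k : ι) : Matrix ι ι ℤ :=
  G * Jmat k + G * colSel k (posPart (-B)) - B0 * colSel k (posPart (-C))

/-- The `C`-matrix `C_t` at the vertex reached from the initial matrix `B0` along `w`. -/
def Cmat (B0 : Matrix ι ι ℤ) (w : List ι) : Matrix ι ι ℤ :=
  (w.foldl (fun p k => (mutate k p.1, Cstep p.1 p.2 k))
    ((B0, 1) : Matrix ι ι ℤ × Matrix ι ι ℤ)).2

/-- The `G`-matrix `G_t` at the vertex reached from the initial matrix `B0` along `w`. -/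
def Gmat (B0 : Matrix ι ι ℤ) (w : List ι) : Matrix ι ι ℤ :=
  (w.foldl (fun p k => (mutate k p.1, Cstep p.1 p.2.1 k, Gstep B0 p.1 p.2.1 p.2.2 k))
    ((B0, 1, 1) : Matrix ι ι ℤ × Matrix ι ι ℤ × Matrix ι ι ℤ)).2.2

/-- A nonzero integer vector with all entries nonnegative. -/
def IsPositiveVec (v : ι → ℤ) : Prop := v ≠ 0 ∧ ∀ i, 0 ≤ v i

/-- A nonzero integer vector with all entries nonpositive. -/
def IsNegativeVec (v : ι → ℤ) : Prop := v ≠ 0 ∧ ∀ i, v i ≤ 0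

/-- Every column is a positive or a negative vector. -/
def ColSignCoherent (M : Matrix ι ι ℤ) : Prop :=
  ∀ j, IsPositiveVec (fun i => M i j) ∨ IsNegativeVec (fun i => M i j)

/-- Every row is a positive or a negative vector. -/
def RowSignCoherent (M : Matrix ι ι ℤ) : Prop :=
  ∀ i, IsPositiveVec (fun j => M i j) ∨ IsNegativeVec (fun j => M i j)

def Fmat (k : ι) (ε : ℤ) (B : Matrix ι ι ℤ) : Matrix ι ι ℤ :=
  Jmat k + rowSel k (posPart (ε • B))

lemma Fmat_apply (k : ι) (ε : ℤ) (B : Matrix ι ι ℤ) (i j : ι) :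
    Fmat k ε B i j = (if i = j then (if i = k then -1 else 1) else 0)
      + (if i = k then max (ε * B k j) 0 else 0) := by
  simp [Fmat, Jmat, rowSel, posPart, Matrix.diagonal]
  rcases eq_or_ne i k with rfl | h
  · simp
  · simp [h]

lemma Cstep_apply (B C : Matrix ι ι ℤ) (k : ι) (i j : ι) :
    Cstep B C k i j = C i j * (if j = k then -1 else 1)
      + C i k * max (B k j) 0 + max (-C i k) 0 * B k j := by
  simp [Cstep, Matrix.mul_apply, Jmat, rowSel, colSel, posPart, Matrix.diagonal,
    mul_ite, ite_mul, mul_zero, zero_mul, Finset.sum_ite_eq, Finset.sum_ite_eq']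

lemma mul_Fmat_apply (C : Matrix ι ι ℤ) (k : ι) (ε : ℤ) (B : Matrix ι ι ℤ) (i j : ι) :
    (C * Fmat k ε B) i j = C i j * (if j = k then -1 else 1) + C i k * max (ε * B k j) 0 := by
  simp only [Matrix.mul_apply, Fmat_apply, mul_add, mul_ite, mul_zero, mul_neg, mul_one,
    Finset.sum_add_distrib, Finset.sum_ite_eq', Finset.mem_univ, if_true]

/-- Under sign coherence of column `k` of `C`, the `C`-step is right multiplication by `F_ε`. -/
lemma Cstep_eq_mul_Fmat (B C : Matrix ι ι ℤ) (k : ι) (ε : ℤ)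
    (hε : (ε = 1 ∧ ∀ i, 0 ≤ C i k) ∨ (ε = -1 ∧ ∀ i, C i k ≤ 0)) :
    Cstep B C k = C * Fmat k ε B := by
  ext i j
  rw [Cstep_apply, mul_Fmat_apply]
  rcases hε with ⟨rfl, h⟩ | ⟨rfl, h⟩
  · have : max (-C i k) 0 = 0 := by simpa using h i
    simp [this]
  · have h1 : max (-C i k) 0 = -C i k := by simpa using h i
    rw [h1]
    rcases le_total (B k j) 0 with hb | hb
    · rw [max_eq_right hb, max_eq_left (by simpa using hb)]; ring
    · rw [max_eq_left hb, max_eq_right (by simpa using hb)]; ring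


lemma diag_mul_apply (D : ι → ℚ) (M : Matrix ι ι ℚ) (i j : ι) :
    (Matrix.diagonal D * M) i j = D i * M i j := by
  simp [Matrix.mul_apply, Matrix.diagonal, ite_mul, zero_mul, Finset.sum_ite_eq]

/-- The key conjugation identity `F_εᵀ (D B) F_ε = D μ_k(B)`. -/
lemma Fmat_conj (k : ι) (ε : ℤ) (hε : ε = 1 ∨ ε = -1) (B : Matrix ι ι ℤ) (D : ι → ℚ)
    (hD : ∀ i, 0 < D i)
    (hskew : ∀ i j, D i * (B i j : ℚ) = -(D j * (B j i : ℚ))) :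
    ((Fmat k ε B).map (Int.cast : ℤ → ℚ))ᵀ *
        (Matrix.diagonal D * B.map (Int.cast : ℤ → ℚ)) *
        (Fmat k ε B).map (Int.cast : ℤ → ℚ) =
      Matrix.diagonal D * (mutate k B).map (Int.cast : ℤ → ℚ) := by
  have hkkQ : (B k k : ℚ) = 0 := by
    have h := hskew k k
    have h0 : D k * (B k k : ℚ) = 0 := by linarith
    rcases mul_eq_zero.mp h0 with h' | h'
    · exact absurd h' (hD k).ne'
    · exact h'
  have hkk : B k k = 0 := by exact_mod_cast hkkQ
  have hF : ∀ l i, ((Fmat k ε B).map (Int.cast : ℤ → ℚ)) l i =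
      (if l = i then (if l = k then (-1 : ℚ) else 1) else 0)
        + (if l = k then ((max (ε * B k i) 0 : ℤ) : ℚ) else 0) := by
    intro l i
    simp only [Matrix.map_apply, Fmat_apply]
    push_cast
    split_ifs <;> push_cast <;> ring
  have hDM : Matrix.diagonal D * B.map (Int.cast : ℤ → ℚ) =
      Matrix.of fun l m => D l * (B l m : ℚ) := by
    ext l m
    rw [diag_mul_apply]
    rfl
  ext i j
  have h1 : ∀ m, (((Fmat k ε B).map (Int.cast : ℤ → ℚ))ᵀ *
      (Matrix.diagonal D * B.map (Int.cast : ℤ → ℚ))) i m =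
      (if i = k then (-1 : ℚ) else 1) * (D i * B i m)
        + ((max (ε * B k i) 0 : ℤ) : ℚ) * (D k * B k m) := by
    intro m
    rw [Matrix.mul_apply]
    simp only [Matrix.transpose_apply, hF, hDM, Matrix.of_apply, add_mul, ite_mul, zero_mul,
      Finset.sum_add_distrib, Finset.sum_ite_eq, Finset.sum_ite_eq', Finset.mem_univ, if_true]
    all_goals split_ifs <;> ring
  have h2 : (((Fmat k ε B).map (Int.cast : ℤ → ℚ))ᵀ *
      (Matrix.diagonal D * B.map (Int.cast : ℤ → ℚ)) *
      (Fmat k ε B).map (Int.cast : ℤ → ℚ)) i j =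
      ((if i = k then (-1 : ℚ) else 1) * (D i * B i j)
          + ((max (ε * B k i) 0 : ℤ) : ℚ) * (D k * B k j)) * (if j = k then (-1 : ℚ) else 1)
        + ((if i = k then (-1 : ℚ) else 1) * (D i * B i k)
          + ((max (ε * B k i) 0 : ℤ) : ℚ) * (D k * B k k)) * ((max (ε * B k j) 0 : ℤ) : ℚ) := by
    rw [Matrix.mul_apply]
    simp only [hF, h1, mul_add, mul_ite, mul_zero, Finset.sum_add_distrib,
      Finset.sum_ite_eq', Finset.mem_univ, if_true]
    all_goals split_ifs <;> ring
  rw [h2, diag_mul_apply, Matrix.map_apply]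
  simp only [mutate, Matrix.of_apply]
  rcases eq_or_ne j k with hjk | hjk
  · rcases eq_or_ne i k with hik | hik
    · simp [hjk, hik, hkk]
    · simp only [hjk, hkk, or_true, if_true, if_neg hik, Int.cast_zero, mul_zero, add_zero]
      norm_num
      all_goals push_cast
      all_goals ring
  · rcases eq_or_ne i k with hik | hik
    · simp only [hik, hjk, hkk, true_or, if_true, if_pos rfl, Int.cast_zero, mul_zero]
      norm_num
      all_goals push_cast
      all_goals ring
    · simp only [hik, hjk, or_self, if_false, ite_false, if_neg hik, if_neg hjk]
      simp only [hkk, Int.cast_zero, mul_zero, add_zero, one_mul, mul_one, if_neg hik,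
        if_neg hjk]
      rcases hε with rfl | rfl
      · rcases le_total 0 (B k i) with hs | hs
        · have h3 : (B i k : ℚ) ≤ 0 := by
            nlinarith [hskew k i, hD k, hD i, (Int.cast_nonneg_iff.mpr hs : (0:ℚ) ≤ (B k i : ℚ))]
          have h4 : B i k ≤ 0 := by exact_mod_cast h3
          have e1 : (1 * B k i) ⊔ 0 = B k i := by rw [one_mul]; exact max_eq_left hs
          have e2 : (1 * B k j) ⊔ 0 = B k j ⊔ 0 := by rw [one_mul]
          have e3 : (-B i k) ⊔ 0 = -B i k := max_eq_left (by simpa using h4)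
          rw [e1, e2, e3]
          push_cast
          linear_combination ((B k j : ℚ)) * hskew k i
        · have h3 : (0:ℚ) ≤ (B i k : ℚ) := by
            nlinarith [hskew k i, hD k, hD i, (Int.cast_nonpos.mpr hs : (B k i : ℚ) ≤ 0)]
          have h4 : 0 ≤ B i k := by exact_mod_cast h3
          have e1 : (1 * B k i) ⊔ 0 = 0 := by rw [one_mul]; exact max_eq_right hs
          have e2 : (1 * B k j) ⊔ 0 = B k j ⊔ 0 := by rw [one_mul]
          have e3 : (-B i k) ⊔ 0 = 0 := max_eq_right (by simpa using h4)
          rw [e1, e2, e3]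
          push_cast
          ring
      · rcases le_total 0 (B k i) with hs | hs
        · have h3 : (B i k : ℚ) ≤ 0 := by
            nlinarith [hskew k i, hD k, hD i, (Int.cast_nonneg_iff.mpr hs : (0:ℚ) ≤ (B k i : ℚ))]
          have h4 : B i k ≤ 0 := by exact_mod_cast h3
          have e1 : (-1 * B k i) ⊔ 0 = 0 := by
            rw [neg_one_mul]; exact max_eq_right (by simpa using hs)
          have e3 : (-B i k) ⊔ 0 = -B i k := max_eq_left (by simpa using h4)
          rcases le_total 0 (B k j) with ht | ht
          · have e2 : (-1 * B k j) ⊔ 0 = 0 := by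
              rw [neg_one_mul]; exact max_eq_right (by simpa using ht)
            have e4 : B k j ⊔ 0 = B k j := max_eq_left ht
            rw [e1, e2, e3, e4]
            push_cast
            ring
          · have e2 : (-1 * B k j) ⊔ 0 = -B k j := by
              rw [neg_one_mul]; exact max_eq_left (by simpa using ht)
            have e4 : B k j ⊔ 0 = 0 := max_eq_right ht
            rw [e1, e2, e3, e4]
            push_cast
            ring
        · have h3 : (0:ℚ) ≤ (B i k : ℚ) := by
            nlinarith [hskew k i, hD k, hD i, (Int.cast_nonpos.mpr hs : (B k i : ℚ) ≤ 0)]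
          have h4 : 0 ≤ B i k := by exact_mod_cast h3
          have e1 : (-1 * B k i) ⊔ 0 = -B k i := by
            rw [neg_one_mul]; exact max_eq_left (by simpa using hs)
          have e3 : (-B i k) ⊔ 0 = 0 := max_eq_right (by simpa using h4)
          rcases le_total 0 (B k j) with ht | ht
          · have e2 : (-1 * B k j) ⊔ 0 = 0 := by
              rw [neg_one_mul]; exact max_eq_right (by simpa using ht)
            have e4 : B k j ⊔ 0 = B k j := max_eq_left ht
            rw [e1, e2, e3, e4]
            push_cast
            linear_combination (-(B k j : ℚ)) * hskew k i
          · have e2 : (-1 * B k j) ⊔ 0 = -B k j := by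
              rw [neg_one_mul]; exact max_eq_left (by simpa using ht)
            have e4 : B k j ⊔ 0 = 0 := max_eq_right ht
            rw [e1, e2, e3, e4]
            push_cast
            linear_combination (-(B k j : ℚ)) * hskew k i

lemma Cmat_foldl_fst (w : List ι) (p : Matrix ι ι ℤ × Matrix ι ι ℤ) :
    (w.foldl (fun p k => (mutate k p.1, Cstep p.1 p.2 k)) p).1 = Bmat p.1 w := by
  induction w generalizing p with
  | nil => simp [Bmat]
  | cons k w ih =>
    simp only [List.foldl_cons]
    rw [ih]
    simp [Bmat]

lemma Bmat_append (B0 : Matrix ι ι ℤ) (w : List ι) (k : ι) :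
    Bmat B0 (w ++ [k]) = mutate k (Bmat B0 w) := by
  simp [Bmat, List.foldl_append]

lemma Cmat_append (B0 : Matrix ι ι ℤ) (w : List ι) (k : ι) :
    Cmat B0 (w ++ [k]) = Cstep (Bmat B0 w) (Cmat B0 w) k := by
  simp only [Cmat, List.foldl_append, List.foldl_cons, List.foldl_nil]
  rw [Cmat_foldl_fst]

lemma map_mul_cast (A C : Matrix ι ι ℤ) :
    (A * C).map (Int.cast : ℤ → ℚ) = A.map (Int.cast : ℤ → ℚ) * C.map (Int.cast : ℤ → ℚ) := by
  ext i j
  simp [Matrix.mul_apply, Matrix.map_apply]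


/-- The `C`-matrix transforms the skew-symmetric form `D B⁰` into `D B_t`. -/
theorem C_transforms_skew_form (n : ℕ) (hn : 1 ≤ n)
    (B0 : Matrix (Fin n) (Fin n) ℤ) (D : Fin n → ℚ) (hD : ∀ i, 0 < D i)
    (hDB0 : ∀ i j, D i * (B0 i j : ℚ) = -(D j * (B0 j i : ℚ)))
    (hsc : ∀ w : List (Fin n), ColSignCoherent (Cmat B0 w))
    (w : List (Fin n)) :
    ((Cmat B0 w).map (Int.cast : ℤ → ℚ))ᵀ *
        (Matrix.diagonal D * B0.map (Int.cast : ℤ → ℚ)) *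
        (Cmat B0 w).map (Int.cast : ℤ → ℚ) =
      Matrix.diagonal D * (Bmat B0 w).map (Int.cast : ℤ → ℚ) := by
  induction w using List.reverseRecOn with
  | nil => simp [Cmat, Bmat, Matrix.map_one]
  | append_singleton w k ih =>
    set B := Bmat B0 w with hB
    set C := Cmat B0 w with hC
    have hSs : (Matrix.diagonal D * B0.map (Int.cast : ℤ → ℚ))ᵀ
        = -(Matrix.diagonal D * B0.map (Int.cast : ℤ → ℚ)) := by
      ext i j
      simp only [Matrix.transpose_apply, Matrix.neg_apply, diag_mul_apply, Matrix.map_apply]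
      rw [hDB0 j i]
    have hNskew : (Matrix.diagonal D * B.map (Int.cast : ℤ → ℚ))ᵀ
        = -(Matrix.diagonal D * B.map (Int.cast : ℤ → ℚ)) := by
      rw [← ih, Matrix.transpose_mul, Matrix.transpose_mul, Matrix.transpose_transpose, hSs]
      simp only [Matrix.neg_mul, Matrix.mul_neg, Matrix.mul_assoc]
    have hskewB : ∀ i j, D i * (B i j : ℚ) = -(D j * (B j i : ℚ)) := by
      intro i j
      have h := congrFun (congrFun hNskew j) i
      simpa [Matrix.transpose_apply, Matrix.neg_apply, diag_mul_apply, Matrix.map_apply]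
        using h
    rw [Cmat_append, Bmat_append, ← hB, ← hC]
    rcases hsc w k with hpos | hneg
    · have hCs : Cstep B C k = C * Fmat k 1 B :=
        Cstep_eq_mul_Fmat B C k 1 (Or.inl ⟨rfl, hpos.2⟩)
      rw [hCs, map_mul_cast]
      calc (C.map (Int.cast : ℤ → ℚ) * (Fmat k 1 B).map (Int.cast : ℤ → ℚ))ᵀ *
            (Matrix.diagonal D * B0.map (Int.cast : ℤ → ℚ)) *
            (C.map (Int.cast : ℤ → ℚ) * (Fmat k 1 B).map (Int.cast : ℤ → ℚ))
          = ((Fmat k 1 B).map (Int.cast : ℤ → ℚ))ᵀ *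
              ((C.map (Int.cast : ℤ → ℚ))ᵀ *
                (Matrix.diagonal D * B0.map (Int.cast : ℤ → ℚ)) *
                C.map (Int.cast : ℤ → ℚ)) *
              (Fmat k 1 B).map (Int.cast : ℤ → ℚ) := by
            rw [Matrix.transpose_mul]
            simp only [Matrix.mul_assoc]
        _ = ((Fmat k 1 B).map (Int.cast : ℤ → ℚ))ᵀ *
              (Matrix.diagonal D * B.map (Int.cast : ℤ → ℚ)) *
              (Fmat k 1 B).map (Int.cast : ℤ → ℚ) := by rw [ih]
        _ = Matrix.diagonal D * (mutate k B).map (Int.cast : ℤ → ℚ) :=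
            Fmat_conj k 1 (Or.inl rfl) B D hD hskewB
    · have hCs : Cstep B C k = C * Fmat k (-1) B :=
        Cstep_eq_mul_Fmat B C k (-1) (Or.inr ⟨rfl, hneg.2⟩)
      rw [hCs, map_mul_cast]
      calc (C.map (Int.cast : ℤ → ℚ) * (Fmat k (-1) B).map (Int.cast : ℤ → ℚ))ᵀ *
            (Matrix.diagonal D * B0.map (Int.cast : ℤ → ℚ)) *
            (C.map (Int.cast : ℤ → ℚ) * (Fmat k (-1) B).map (Int.cast : ℤ → ℚ))
          = ((Fmat k (-1) B).map (Int.cast : ℤ → ℚ))ᵀ *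
              ((C.map (Int.cast : ℤ → ℚ))ᵀ *
                (Matrix.diagonal D * B0.map (Int.cast : ℤ → ℚ)) *
                C.map (Int.cast : ℤ → ℚ)) *
              (Fmat k (-1) B).map (Int.cast : ℤ → ℚ) := by
            rw [Matrix.transpose_mul]
            simp only [Matrix.mul_assoc]
        _ = ((Fmat k (-1) B).map (Int.cast : ℤ → ℚ))ᵀ *
              (Matrix.diagonal D * B.map (Int.cast : ℤ → ℚ)) *
              (Fmat k (-1) B).map (Int.cast : ℤ → ℚ) := by rw [ih]
        _ = Matrix.diagonal D * (mutate k B).map (Int.cast : ℤ → ℚ) :=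
            Fmat_conj k (-1) (Or.inr rfl) B D hD hskewB


end ClusterPattern
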